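/- Suppose C ⊆ ℝⁿ is convex with Pre^N(λγ·C) ⊇ γ·C where γ ∈ (0,1), λ ∈ [0,1), N ≥ 1, the safe set S and disturbance set D are convex, and Pre^N(C) ⊇ C (C is robust controlled invariant under N-step iteration). Then for any ξ with λγ ≤ ξ < 1, Pre^N(ξ·C) ⊇ g(ξ)·C, where g(ξ) = ((1−γ)/(1−λγ))·ξ + ((1−λ)γ)/(1−λγ). -/

import Mathlib

open Pointwise

/-- One-step backward reachable set for the linear system x⁺ = Ax + Bu + Ed. -/
def Pre {n m l : ℕ} (A : Matrix (Fin n) (Fin n) ℝ) (B : Matrix (Fin n) (Fin m) ℝ)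
    (E : Matrix (Fin n) (Fin l) ℝ) (X : Set (Fin n → ℝ))
    (S : Set ((Fin n → ℝ) × (Fin m → ℝ))) (D : Set (Fin l → ℝ)) : Set (Fin n → ℝ) :=
  {x | ∃ u, (x, u) ∈ S ∧ ∀ d ∈ D, A.mulVec x + B.mulVec u + E.mulVec d ∈ X}

theorem Pre_mono {n m l : ℕ} (A : Matrix (Fin n) (Fin n) ℝ) (B : Matrix (Fin n) (Fin m) ℝ)
    (E : Matrix (Fin n) (Fin l) ℝ) {X Y : Set (Fin n → ℝ)}
    (S : Set ((Fin n → ℝ) × (Fin m → ℝ))) (D : Set (Fin l → ℝ)) (h : X ⊆ Y) :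
    Pre A B E X S D ⊆ Pre A B E Y S D := by
  rintro x ⟨u, hu, hd⟩
  exact ⟨u, hu, fun d hdD => h (hd d hdD)⟩

theorem Pre_combo {n m l : ℕ} (A : Matrix (Fin n) (Fin n) ℝ) (B : Matrix (Fin n) (Fin m) ℝ)
    (E : Matrix (Fin n) (Fin l) ℝ)
    {S : Set ((Fin n → ℝ) × (Fin m → ℝ))} {D : Set (Fin l → ℝ)}
    (hS : Convex ℝ S) (hD : Convex ℝ D)
    {a b : ℝ} (ha : 0 ≤ a) (hb : 0 ≤ b) (hab : a + b = 1) (X₁ X₂ : Set (Fin n → ℝ)) :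
    a • Pre A B E X₁ S D + b • Pre A B E X₂ S D ⊆ Pre A B E (a • X₁ + b • X₂) S D := by
  rintro x ⟨-, ⟨x₁, ⟨u₁, hSu₁, hd₁⟩, rfl⟩, -, ⟨x₂, ⟨u₂, hSu₂, hd₂⟩, rfl⟩, rfl⟩
  refine ⟨a • u₁ + b • u₂, ?_, ?_⟩
  · exact hS hSu₁ hSu₂ ha hb hab
  · intro d hdD
    refine ⟨_, ⟨_, hd₁ d hdD, rfl⟩, _, ⟨_, hd₂ d hdD, rfl⟩, ?_⟩
    have hb' : b = 1 - a := by linarith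
    subst hb'
    simp only [Matrix.mulVec_add, Matrix.mulVec_smul, smul_add]
    module

theorem Pre_combo_iter {n m l : ℕ} (A : Matrix (Fin n) (Fin n) ℝ) (B : Matrix (Fin n) (Fin m) ℝ)
    (E : Matrix (Fin n) (Fin l) ℝ)
    {S : Set ((Fin n → ℝ) × (Fin m → ℝ))} {D : Set (Fin l → ℝ)}
    (hS : Convex ℝ S) (hD : Convex ℝ D)
    {a b : ℝ} (ha : 0 ≤ a) (hb : 0 ≤ b) (hab : a + b = 1) (N : ℕ) (X₁ X₂ : Set (Fin n → ℝ)) :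
    a • (fun X => Pre A B E X S D)^[N] X₁ + b • (fun X => Pre A B E X S D)^[N] X₂ ⊆
      (fun X => Pre A B E X S D)^[N] (a • X₁ + b • X₂) := by
  induction N generalizing X₁ X₂ with
  | zero => simp
  | succ k ih =>
      simp only [Function.iterate_succ_apply]
      refine (ih _ _).trans ?_
      have hmono : ∀ (k : ℕ) {X Y : Set (Fin n → ℝ)}, X ⊆ Y →
          (fun X => Pre A B E X S D)^[k] X ⊆ (fun X => Pre A B E X S D)^[k] Y := by
        intro k
        induction k with
        | zero => intro X Y h; simpa using h
        | succ j ihj =>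
            intro X Y h
            simp only [Function.iterate_succ_apply]
            exact ihj (Pre_mono A B E S D h)
      exact hmono k (Pre_combo A B E hS hD ha hb hab X₁ X₂)

theorem contractive_expansion {n m l : ℕ} (A : Matrix (Fin n) (Fin n) ℝ)
    (B : Matrix (Fin n) (Fin m) ℝ) (E : Matrix (Fin n) (Fin l) ℝ)
    (S : Set ((Fin n → ℝ) × (Fin m → ℝ))) (D : Set (Fin l → ℝ))
    (hScvx : Convex ℝ S) (hDcvx : Convex ℝ D)
    (C : Set (Fin n → ℝ)) (hCcvx : Convex ℝ C)
    (γ lam : ℝ) (hγ : γ ∈ Set.Ioo (0 : ℝ) 1) (hlam : lam ∈ Set.Ico (0 : ℝ) 1)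
    (N : ℕ) (hN : 1 ≤ N)
    (hcontr : γ • C ⊆ (fun X => Pre A B E X S D)^[N] ((lam * γ) • C))
    (hinv : C ⊆ (fun X => Pre A B E X S D)^[N] C) :
    ∀ ξ : ℝ, lam * γ ≤ ξ → ξ < 1 →
      ((1 - γ) / (1 - lam * γ) * ξ + (1 - lam) * γ / (1 - lam * γ)) • C ⊆
        (fun X => Pre A B E X S D)^[N] (ξ • C) := by
  intro ξ hξ1 hξ2
  obtain ⟨hγ0, hγ1⟩ := hγ
  obtain ⟨hlam0, hlam1⟩ := hlam
  have hlg : lam * γ < 1 := by nlinarith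
  have hden : (0:ℝ) < 1 - lam * γ := by linarith
  set a : ℝ := (ξ - lam * γ) / (1 - lam * γ) with ha_def
  set b : ℝ := (1 - ξ) / (1 - lam * γ) with hb_def
  have ha : 0 ≤ a := div_nonneg (by linarith) hden.le
  have hb : 0 ≤ b := div_nonneg (by linarith) hden.le
  have hab : a + b = 1 := by rw [ha_def, hb_def]; field_simp; ring
  have hg : (1 - γ) / (1 - lam * γ) * ξ + (1 - lam) * γ / (1 - lam * γ) = a + b * γ := by
    rw [ha_def, hb_def]; field_simp [hden.ne']; ring
  have hxi : a + b * (lam * γ) = ξ := by rw [ha_def, hb_def]; field_simp [hden.ne']; ring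
  rw [hg]
  have h1 : (a + b * γ) • C ⊆ a • C + b • (γ • C) := by
    rw [smul_smul, ← Convex.add_smul hCcvx ha (by positivity)]
  refine h1.trans ?_
  have h2 : a • C + b • (γ • C) ⊆
      a • (fun X => Pre A B E X S D)^[N] C +
      b • (fun X => Pre A B E X S D)^[N] ((lam * γ) • C) :=
    Set.add_subset_add (Set.smul_set_mono hinv) (Set.smul_set_mono hcontr)
  refine h2.trans ?_
  refine (Pre_combo_iter A B E hScvx hDcvx ha hb hab N _ _).trans ?_
  have h3 : a • C + b • ((lam * γ) • C) = ξ • C := by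
    rw [smul_smul, ← Convex.add_smul hCcvx ha (by positivity), hxi]
  rw [h3]
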